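/- Let A be an integral domain which is an algebra over ℚ, let D : A → A be a derivation, let f ∈ A, and let n ≥ 1 be a natural number. Then D(f) lies in the principal ideal (f) if and only if D(fⁿ) lies in the principal ideal (fⁿ). -/
import Mathlib


/-- Let `A` be an integral domain which is a `ℚ`-algebra, `D` a derivation of `A`, `f ∈ A`
and `n ≥ 1`. Then `D f ∈ (f)` if and only if `D (f ^ n) ∈ (f ^ n)`. -/
theorem derivation_mem_span_iff_pow {A : Type*} [CommRing A] [IsDomain A] [Algebra ℚ A]
    (D : Derivation ℚ A A) (f : A) (n : ℕ) (hn : 1 ≤ n) :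
    D f ∈ Ideal.span {f} ↔ D (f ^ n) ∈ Ideal.span {f ^ n} := by
  rw [Ideal.mem_span_singleton, Ideal.mem_span_singleton, Derivation.leibniz_pow]
  rcases eq_or_ne f 0 with rfl | hf
  · simp [zero_pow (by omega : n ≠ 0)]
  have h1 : f ^ n = f ^ (n - 1) * f := by rw [← pow_succ]; congr 1; omega
  constructor
  · rintro ⟨c, hc⟩
    refine ⟨n • c, ?_⟩
    simp only [smul_eq_mul, nsmul_eq_mul, hc, h1]
    ring
  · rintro ⟨c, hc⟩
    simp only [smul_eq_mul, nsmul_eq_mul, h1] at hc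
    have hcancel : (n : A) * D f = f * c := by
      have hne : f ^ (n - 1) ≠ 0 := pow_ne_zero _ hf
      apply mul_left_cancel₀ hne
      rw [show f ^ (n-1) * ((n:A) * D f) = (n:A) * (f ^ (n-1) * D f) by ring, hc]
      ring
    have hninv : IsUnit (n : A) := by
      have : (n : A) = algebraMap ℚ A n := by simp
      rw [this]
      exact IsUnit.map _ (isUnit_iff_ne_zero.mpr
        (by exact_mod_cast Nat.one_le_iff_ne_zero.mp hn))
    obtain ⟨u, hu⟩ := hninv
    refine ⟨↑u⁻¹ * c, ?_⟩
    have := congrArg (fun x => (↑u⁻¹ : A) * x) hcancel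
    simp only [← hu] at this
    rw [← mul_assoc, Units.inv_mul, one_mul] at this
    rw [this]; ring
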